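/- Let G be a connected solvable subgroup of GL_n(ℂ). Then there exists a complete flag 0 = V_0 ≤ V_1 ≤ ... ≤ V_n = ℂ^n of G-invariant subspaces with dim V_j = j, and for any such flag the commutator subgroup G' acts trivially on each quotient V_{j+1}/V_j. -/

import Mathlib

open Matrix Module
open scoped Pointwise
open scoped commutatorElement



section Aux

lemma LK.eqOn_of_preconnected_of_finite {X : Type*} [TopologicalSpace X] {s : Set X}
    (hs : IsPreconnected s) {f : X → ℂ} (hf : Continuous f) {F : Set ℂ} (hF : F.Finite)
    (hmem : ∀ x ∈ s, f x ∈ F) {a b : X} (ha : a ∈ s) (hb : b ∈ s) : f a = f b := by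
  by_contra hne
  have hu : IsOpen (f ⁻¹' (F \ {f a})ᶜ) :=
    ((hF.subset Set.diff_subset).isClosed.isOpen_compl).preimage hf
  have hv : IsOpen (f ⁻¹' ({f a}ᶜ)) := isClosed_singleton.isOpen_compl.preimage hf
  obtain ⟨z, hzs, hz1, hz2⟩ := hs _ _ hu hv
    (fun x _ => by
      by_cases h : f x = f a
      · exact Or.inl (by simp [h])
      · exact Or.inr h)
    ⟨a, ha, by simp⟩ ⟨b, hb, fun h => hne (h.symm)⟩
  exact hz1 ⟨hmem z hzs, hz2⟩

set_option linter.unusedSectionVars false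
variable {Γ : Type*} [Group Γ] [TopologicalSpace Γ] [IsTopologicalGroup Γ]

lemma LK.isConnected_pow {S : Set Γ} (hS : IsConnected S) (h1 : (1:Γ) ∈ S) :
    ∀ m : ℕ, IsConnected (S ^ m) ∧ (1:Γ) ∈ S ^ m := by
  intro m
  induction m with
  | zero =>
    rw [pow_zero]
    exact ⟨by rw [← Set.singleton_one]; exact isConnected_singleton, Set.mem_one.mpr rfl⟩
  | succ m ih =>
    rw [pow_succ]
    constructor
    · have : S ^ m * S = (fun p : Γ × Γ => p.1 * p.2) '' ((S ^ m) ×ˢ S) := by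
        rw [Set.image_prod]; rfl
      rw [this]
      exact ((ih.1.prod hS)).image _ (continuous_mul.continuousOn)
    · simpa using Set.mul_mem_mul ih.2 h1

lemma LK.coe_closure_eq_iUnion_pow {S : Set Γ} (hsymm : S⁻¹ ⊆ S) (h1 : (1:Γ) ∈ S) :
    (Subgroup.closure S : Set Γ) = ⋃ m : ℕ, S ^ m := by
  apply le_antisymm
  · have hsub : ∃ T : Subgroup Γ, (T : Set Γ) = ⋃ m : ℕ, S ^ m := by
      refine ⟨{ carrier := ⋃ m : ℕ, S ^ m,
                one_mem' := Set.mem_iUnion.mpr ⟨0, by simp [pow_zero]⟩,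
                mul_mem' := ?_, inv_mem' := ?_ }, rfl⟩
      · rintro a b ha hb
        obtain ⟨p, hp⟩ := Set.mem_iUnion.mp ha
        obtain ⟨q, hq⟩ := Set.mem_iUnion.mp hb
        exact Set.mem_iUnion.mpr ⟨p + q, by rw [pow_add]; exact Set.mul_mem_mul hp hq⟩
      · intro a ha
        obtain ⟨p, hp⟩ := Set.mem_iUnion.mp ha
        refine Set.mem_iUnion.mpr ⟨p, ?_⟩
        have hSinv : ∀ m : ℕ, (S ^ m)⁻¹ ⊆ S ^ m := by
          intro m
          induction m with
          | zero => simp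
          | succ m ihm =>
            rw [pow_succ, _root_.mul_inv_rev]
            intro x hx
            obtain ⟨u, hu, w, hw, rfl⟩ := hx
            have : S ^ m * S = S * S ^ m := by rw [← pow_succ, pow_succ']
            rw [this]
            exact Set.mul_mem_mul (hsymm hu) (ihm hw)
        exact hSinv p (Set.inv_mem_inv.mpr hp)
    obtain ⟨T, hT⟩ := hsub
    have : Subgroup.closure S ≤ T := Subgroup.closure_le T |>.mpr (by
      rw [hT]; exact fun x hx => Set.mem_iUnion.mpr ⟨1, by simpa [pow_one] using hx⟩)
    exact fun x hx => hT ▸ this hx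
  · intro x hx
    obtain ⟨m, hm⟩ := Set.mem_iUnion.mp hx
    clear hx
    induction m generalizing x with
    | zero => simp only [pow_zero, Set.mem_one] at hm; rw [hm]; exact Subgroup.one_mem _
    | succ m ihm =>
      rw [pow_succ'] at hm
      obtain ⟨u, hu, w, hw, rfl⟩ := hm
      exact mul_mem (Subgroup.subset_closure hu) (ihm hw)

lemma LK.isConnected_coe_closure {S : Set Γ} (hS : IsConnected S) (hsymm : S⁻¹ ⊆ S)
    (h1 : (1:Γ) ∈ S) : IsConnected (Subgroup.closure S : Set Γ) := by
  rw [LK.coe_closure_eq_iUnion_pow hsymm h1]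
  refine ⟨⟨1, Set.mem_iUnion.mpr ⟨0, by simp [pow_zero]⟩⟩, ?_⟩
  apply isPreconnected_iUnion
  · exact ⟨1, Set.mem_iInter.mpr fun m => (LK.isConnected_pow hS h1 m).2⟩
  · exact fun m => (LK.isConnected_pow hS h1 m).1.isPreconnected

lemma LK.isConnected_commutator_subgroup {K : Subgroup Γ} (hK : IsConnected (K : Set Γ)) :
    IsConnected ((⁅K, K⁆ : Subgroup Γ) : Set Γ) := by
  rw [Subgroup.commutator_def]
  apply LK.isConnected_coe_closure
  · have : { g | ∃ g₁ ∈ K, ∃ g₂ ∈ K, ⁅g₁, g₂⁆ = g } =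
        (fun p : Γ × Γ => ⁅p.1, p.2⁆) '' ((K : Set Γ) ×ˢ (K : Set Γ)) := by
      ext x
      constructor
      · rintro ⟨a, ha, b, hb, rfl⟩; exact ⟨(a, b), ⟨ha, hb⟩, rfl⟩
      · rintro ⟨⟨a, b⟩, ⟨ha, hb⟩, rfl⟩; exact ⟨a, ha, b, hb, rfl⟩
    rw [this]
    refine (hK.prod hK).image _ ?_
    have : Continuous fun p : Γ × Γ => p.1 * p.2 * p.1⁻¹ * p.2⁻¹ := by fun_prop
    exact this.continuousOn
  · rintro x hx
    obtain ⟨a, ha, b, hb, hab⟩ := Set.mem_inv.mp hx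
    exact ⟨b, hb, a, ha, by rw [← commutatorElement_inv, hab, inv_inv]⟩
  · exact ⟨1, K.one_mem, 1, K.one_mem, by simp⟩

lemma LK.commutator_le_self (K : Subgroup Γ) : ⁅K, K⁆ ≤ K :=
  Subgroup.commutator_le.mpr fun p hp q hq => by
    rw [commutatorElement_def]
    exact mul_mem (mul_mem (mul_mem hp hq) (inv_mem hp)) (inv_mem hq)

lemma LK.map_subtype_commutator (K : Subgroup Γ) :
    Subgroup.map K.subtype (commutator ↥K) = ⁅K, K⁆ := by
  rw [commutator, Subgroup.map_commutator]
  congr 1 <;> (ext x; simp [Subgroup.mem_map])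

lemma LK.conj_mem_commutator {K : Subgroup Γ} {g h : Γ} (hg : g ∈ K) (hh : h ∈ ⁅K, K⁆) :
    g⁻¹ * h * g ∈ ⁅K, K⁆ := by
  rw [← LK.map_subtype_commutator] at hh ⊢
  obtain ⟨z, hz, rfl⟩ := hh
  refine ⟨(⟨g, hg⟩ : ↥K)⁻¹ * z * ⟨g, hg⟩, ?_, rfl⟩
  have : ((⟨g, hg⟩ : ↥K)⁻¹ * z * ⟨g, hg⟩) = (⟨g, hg⟩ : ↥K)⁻¹ * z * ((⟨g, hg⟩ : ↥K)⁻¹)⁻¹ := by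
    rw [inv_inv]
  rw [this]
  exact (Subgroup.commutator_normal ⊤ ⊤).conj_mem z hz _

/-- Iterated commutator series of a subgroup, as subgroups of the ambient group. -/
def LK.cser (K : Subgroup Γ) : ℕ → Subgroup Γ
  | 0 => K
  | d + 1 => ⁅LK.cser K d, LK.cser K d⁆

lemma LK.cser_succ_eq (K : Subgroup Γ) (d : ℕ) :
    LK.cser K (d + 1) = LK.cser ⁅K, K⁆ d := by
  induction d with
  | zero => rfl
  | succ d ih => show ⁅LK.cser K (d+1), LK.cser K (d+1)⁆ = _; rw [ih]; rfl

lemma LK.map_derivedSeries (K : Subgroup Γ) (d : ℕ) :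
    Subgroup.map K.subtype (derivedSeries ↥K d) = LK.cser K d := by
  induction d with
  | zero =>
    show Subgroup.map K.subtype ⊤ = K
    ext x; simp [Subgroup.mem_map]
  | succ d ih =>
    show Subgroup.map K.subtype ⁅derivedSeries ↥K d, derivedSeries ↥K d⁆ = _
    rw [Subgroup.map_commutator, ih]; rfl

end Aux

lemma LK.commute_exists_common_eigenvector :
    ∀ (k : ℕ) (V : Type) [AddCommGroup V] [Module ℂ V] [FiniteDimensional ℂ V],
      Module.finrank ℂ V = k → Nontrivial V → ∀ (ι : Type) (f : ι → Module.End ℂ V),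
      (∀ i j, Commute (f i) (f j)) →
      ∃ v : V, v ≠ 0 ∧ ∀ i, ∃ c : ℂ, f i v = c • v := by
  intro k
  induction k using Nat.strong_induction_on with
  | _ k IH =>
    intro V _ _ _ hk hnt ι f hcomm
    by_cases hall : ∀ i c, (f i).eigenspace c ≠ ⊥ → (f i).eigenspace c = ⊤
    · obtain ⟨v, hv⟩ := exists_ne (0 : V)
      refine ⟨v, hv, fun i => ?_⟩
      obtain ⟨c, hc⟩ := Module.End.exists_eigenvalue (f i)
      have := hall i c (by rw [Module.End.hasEigenvalue_iff] at hc; exact hc)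
      exact ⟨c, Module.End.mem_eigenspace_iff.mp (this ▸ Submodule.mem_top)⟩
    · push_neg at hall
      obtain ⟨i, c, hne_bot, hne_top⟩ := hall
      set E := (f i).eigenspace c with hE
      have hmaps : ∀ j, Set.MapsTo (f j) E E := by
        intro j x hx
        simp only [SetLike.mem_coe, hE, Module.End.mem_eigenspace_iff] at hx ⊢
        have := congrArg (fun T : Module.End ℂ V => T x) (hcomm i j).eq
        simp only [Module.End.mul_apply] at this
        rw [this, hx, _root_.map_smul]
      have hEnt : Nontrivial E := Submodule.nontrivial_iff_ne_bot.mpr hne_bot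
      have hElt : finrank ℂ E < k := hk ▸ Submodule.finrank_lt hne_top
      have hcomm' : ∀ a b, Commute ((f a).restrict (hmaps a)) ((f b).restrict (hmaps b)) := by
        intro a b
        apply LinearMap.ext
        rintro ⟨x, hx⟩
        ext
        simp only [Module.End.mul_apply, LinearMap.restrict_coe_apply]
        have := congrArg (fun T : Module.End ℂ V => T x) (hcomm a b).eq
        exact this
      obtain ⟨v, hv0, hv⟩ := IH _ hElt E rfl hEnt ι (fun j => (f j).restrict (hmaps j)) hcomm'
      refine ⟨(v : V), by simpa using hv0, fun j => ?_⟩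
      obtain ⟨cj, hcj⟩ := hv j
      exact ⟨cj, congrArg (Subtype.val) hcj⟩

set_option maxHeartbeats 2000000 in
lemma LK.main (n : ℕ) :
    ∀ (d : ℕ) (K : Subgroup (GL (Fin n) ℂ)), IsConnected (K : Set (GL (Fin n) ℂ)) →
      LK.cser K d = ⊥ →
      ∀ U : Submodule ℂ (Fin n → ℂ), U ≠ ⊤ →
        (∀ g ∈ K, ∀ u ∈ U, (g : Matrix (Fin n) (Fin n) ℂ).mulVec u ∈ U) →
        ∃ v, v ∉ U ∧ ∀ g ∈ K, ∃ c : ℂ, (g : Matrix (Fin n) (Fin n) ℂ).mulVec v - c • v ∈ U := by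
  intro d
  induction d with
  | zero =>
    intro K _ hbot U hU _
    obtain ⟨v, -, hv⟩ := SetLike.exists_of_lt (lt_top_iff_ne_top.mpr hU : U < (⊤ : Submodule ℂ (Fin n → ℂ)))
    refine ⟨v, hv, fun g hg => ⟨1, ?_⟩⟩
    have hg1 : g = 1 := by
      rw [show LK.cser K 0 = K from rfl, Subgroup.eq_bot_iff_forall] at hbot
      exact hbot g hg
    rw [hg1, Units.val_one, one_mulVec, one_smul, sub_self]
    exact U.zero_mem
  | succ d ih =>
    intro K hKconn hbot U hU hinv
    set H : Subgroup (GL (Fin n) ℂ) := ⁅K, K⁆ with hHdef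
    have hHK : H ≤ K := LK.commutator_le_self K
    have hHconn : IsConnected (H : Set (GL (Fin n) ℂ)) :=
      LK.isConnected_commutator_subgroup hKconn
    have hHbot : LK.cser H d = ⊥ := by rw [← LK.cser_succ_eq]; exact hbot
    obtain ⟨v, hvU, hveig⟩ := ih H hHconn hHbot U hU (fun g hg => hinv g (hHK hg))
    set π := U.mkQ with hπdef
    have hπv : π v ≠ 0 := fun h0 => hvU (by rwa [hπdef, Submodule.mkQ_apply, Submodule.Quotient.mk_eq_zero] at h0)
    obtain ⟨φ, hφ⟩ : ∃ φ : ((Fin n → ℂ) ⧸ U) →ₗ[ℂ] ℂ, φ (π v) = 1 := by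
      obtain ⟨φ, hφ⟩ := (LinearMap.toSpanSingleton ℂ _ (π v)).exists_leftInverse_of_injective
        (LinearMap.ker_toSpanSingleton ℂ hπv)
      exact ⟨φ, by simpa using congrArg (fun ψ => ψ (1:ℂ)) hφ⟩
    have hcomap : ∀ g : ↥K,
        U ≤ U.comap (mulVecLin ((g : GL (Fin n) ℂ) : Matrix (Fin n) (Fin n) ℂ)) := by
      intro g u hu
      simpa [Submodule.mem_comap, mulVecLin_apply] using hinv ↑g g.2 u hu
    set ρ : ↥K → Module.End ℂ ((Fin n → ℂ) ⧸ U) :=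
      fun g => U.mapQ U (mulVecLin ((g : GL (Fin n) ℂ) : Matrix (Fin n) (Fin n) ℂ)) (hcomap g)
      with hρdef
    have hρ_apply : ∀ (g : ↥K) (x : Fin n → ℂ),
        ρ g (π x) = π (((g : GL (Fin n) ℂ) : Matrix (Fin n) (Fin n) ℂ).mulVec x) := by
      intro g x
      rw [hρdef, hπdef, Submodule.mkQ_apply, Submodule.mapQ_apply, mulVecLin_apply,
        Submodule.mkQ_apply]
    have hρ_mul : ∀ g h : ↥K, ρ (g * h) = ρ g * ρ h := by
      intro g h
      apply Submodule.linearMap_qext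
      apply LinearMap.ext
      intro x
      show ρ (g * h) (π x) = (ρ g * ρ h) (π x)
      rw [hρ_apply, Module.End.mul_apply, hρ_apply, hρ_apply, mulVec_mulVec]
      congr 2
    -- lam
    set lam : GL (Fin n) ℂ → ℂ :=
      fun k => φ (π ((k : Matrix (Fin n) (Fin n) ℂ).mulVec v)) with hlamdef
    have hlam_cont : Continuous lam := by
      have h2 : Continuous (φ.comp U.mkQ : (Fin n → ℂ) →ₗ[ℂ] ℂ) :=
        LinearMap.continuous_of_finiteDimensional _
      have h3 : Continuous (fun A : Matrix (Fin n) (Fin n) ℂ => A.mulVec v) :=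
        continuous_id.matrix_mulVec continuous_const
      exact (h2.comp h3).comp Units.continuous_val
    have hlam_one : lam 1 = 1 := by
      rw [hlamdef]
      show φ (π (((1 : GL (Fin n) ℂ) : Matrix (Fin n) (Fin n) ℂ).mulVec v)) = 1
      rw [Units.val_one, one_mulVec]
      exact hφ
    have hHeig : ∀ h ∈ H, π ((h : Matrix (Fin n) (Fin n) ℂ).mulVec v) = lam h • π v := by
      intro h hh
      obtain ⟨c, hc⟩ := hveig h hh
      have h1 : π ((h : Matrix (Fin n) (Fin n) ℂ).mulVec v) = c • π v := by
        have h0 : U.mkQ ((h : Matrix (Fin n) (Fin n) ℂ).mulVec v - c • v) = 0 := by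
          rw [Submodule.mkQ_apply]; exact (Submodule.Quotient.mk_eq_zero U).mpr hc
        rw [map_sub, _root_.map_smul, sub_eq_zero] at h0
        exact h0
      have h2 : lam h = c := by
        rw [hlamdef]
        show φ (π ((h : Matrix (Fin n) (Fin n) ℂ).mulVec v)) = c
        rw [h1, _root_.map_smul, hφ, smul_eq_mul, mul_one]
      rw [h1, h2]
    have hgv_ne : ∀ g ∈ K, (g : Matrix (Fin n) (Fin n) ℂ).mulVec v ∉ U := by
      intro g hg hmem
      apply hvU
      have := hinv g⁻¹ (K.inv_mem hg) _ hmem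
      rwa [mulVec_mulVec, ← Units.val_mul, inv_mul_cancel, Units.val_one, one_mulVec] at this
    have hπgv_ne : ∀ g ∈ K, π ((g : Matrix (Fin n) (Fin n) ℂ).mulVec v) ≠ 0 := by
      intro g hg h0
      exact hgv_ne g hg (by rwa [hπdef, Submodule.mkQ_apply, Submodule.Quotient.mk_eq_zero] at h0)
    have hconst : ∀ g ∈ K, ∀ h ∈ H,
        π ((h : Matrix (Fin n) (Fin n) ℂ).mulVec ((g : Matrix (Fin n) (Fin n) ℂ).mulVec v)) =
          lam h • π ((g : Matrix (Fin n) (Fin n) ℂ).mulVec v) := by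
      intro g hg h hh
      set F : GL (Fin n) ℂ → ℂ := fun x => lam (x⁻¹ * h * x) with hFdef
      have hFcont : Continuous F := hlam_cont.comp (by fun_prop)
      have key : ∀ x ∈ K,
          π ((h : Matrix (Fin n) (Fin n) ℂ).mulVec ((x : Matrix (Fin n) (Fin n) ℂ).mulVec v)) =
            F x • π ((x : Matrix (Fin n) (Fin n) ℂ).mulVec v) := by
        intro x hx
        have hconj : x⁻¹ * h * x ∈ H := LK.conj_mem_commutator hx hh
        have e0 : h * x = x * (x⁻¹ * h * x) := by group
        have e1 : (h : Matrix (Fin n) (Fin n) ℂ).mulVec ((x : Matrix (Fin n) (Fin n) ℂ).mulVec v)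
            = (x : Matrix (Fin n) (Fin n) ℂ).mulVec
              (((x⁻¹ * h * x : GL (Fin n) ℂ) : Matrix (Fin n) (Fin n) ℂ).mulVec v) := by
          rw [mulVec_mulVec, mulVec_mulVec, ← Units.val_mul, ← Units.val_mul, e0]
        rw [e1, ← hρ_apply ⟨x, hx⟩, hHeig _ hconj, _root_.map_smul, hρ_apply]
      have hval : ∀ x ∈ K, (ρ ⟨h, hHK hh⟩).HasEigenvalue (F x) := by
        intro x hx
        refine Module.End.hasEigenvalue_of_hasEigenvector
          ⟨Module.End.mem_eigenspace_iff.mpr ?_, hπgv_ne x hx⟩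
        rw [hρ_apply]
        exact key x hx
      have hFg : F g = F 1 :=
        LK.eqOn_of_preconnected_of_finite hKconn.isPreconnected hFcont
          (ρ ⟨h, hHK hh⟩).finite_hasEigenvalue hval hg K.one_mem
      have hF1 : F 1 = lam h := by rw [hFdef]; simp
      rw [key g hg, hFg, hF1]
    -- the span W
    set W : Submodule ℂ ((Fin n → ℂ) ⧸ U) := Submodule.span ℂ
      {w | ∃ g ∈ K, w = π ((g : Matrix (Fin n) (Fin n) ℂ).mulVec v)} with hWdef
    have hvW : π v ∈ W :=
      Submodule.subset_span ⟨1, K.one_mem, by rw [Units.val_one, one_mulVec]⟩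
    have hWmaps : ∀ g : ↥K, Set.MapsTo (ρ g) W W := by
      intro g w hw
      simp only [SetLike.mem_coe] at hw ⊢
      induction hw using Submodule.span_induction with
      | mem x hx =>
        obtain ⟨g', hg', rfl⟩ := hx
        rw [hρ_apply]
        apply Submodule.subset_span
        refine ⟨↑(g * ⟨g', hg'⟩ : ↥K), (g * ⟨g', hg'⟩ : ↥K).2, ?_⟩
        rw [mulVec_mulVec, ← Units.val_mul]
        rfl
      | zero => rw [map_zero]; exact W.zero_mem
      | add x y _ _ hx hy => rw [map_add]; exact W.add_mem hx hy
      | smul c x _ hx => rw [_root_.map_smul]; exact W.smul_mem c hx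
    have hWfix0 : ∀ (h) (hh : h ∈ H), ∀ w ∈ W, ρ ⟨h, hHK hh⟩ w = lam h • w := by
      intro h hh w hw
      induction hw using Submodule.span_induction with
      | mem x hx =>
        obtain ⟨g', hg', rfl⟩ := hx
        rw [hρ_apply]
        exact hconst g' hg' h hh
      | zero => rw [map_zero, smul_zero]
      | add x y _ _ hx hy => rw [map_add, hx, hy, smul_add]
      | smul c x _ hx => rw [_root_.map_smul, hx, smul_comm]
    have hWnt : Nontrivial ↥W := Submodule.nontrivial_iff_ne_bot.mpr (by
      intro hb
      rw [hb] at hvW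
      exact hπv ((Submodule.mem_bot ℂ).mp hvW))
    -- σ and δ
    set σ : ↥K → Module.End ℂ ↥W := fun g => (ρ g).restrict (hWmaps g) with hσdef
    have hσ_apply : ∀ (g : ↥K) (w : ↥W), (σ g w : (Fin n → ℂ) ⧸ U) = ρ g w := by
      intro g w; rfl
    have hσ_mul : ∀ g h : ↥K, σ (g * h) = σ g * σ h := by
      intro g h
      apply LinearMap.ext
      intro w
      apply Subtype.ext
      rw [Module.End.mul_apply, hσ_apply, hσ_apply, hσ_apply, hρ_mul, Module.End.mul_apply]
    set δ : ↥K → ℂ := fun g => LinearMap.det (σ g) with hδdef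
    have hδ_mul : ∀ g h : ↥K, δ (g * h) = δ g * δ h := by
      intro g h
      rw [hδdef]
      show LinearMap.det (σ (g*h)) = _
      rw [hσ_mul, _root_.map_mul]
    have hσ_one : σ 1 = 1 := by
      apply LinearMap.ext
      intro w
      apply Subtype.ext
      rw [hσ_apply]
      show ρ 1 (w : (Fin n → ℂ) ⧸ U) = ((1 : Module.End ℂ ↥W) w : (Fin n → ℂ) ⧸ U)
      obtain ⟨x, hx⟩ := U.mkQ_surjective (w : (Fin n → ℂ) ⧸ U)
      rw [Module.End.one_apply, ← hx, ← hπdef, hρ_apply]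
      norm_num
    have hδ_one : δ 1 = 1 := by
      rw [hδdef]; show LinearMap.det (σ 1) = 1; rw [hσ_one, _root_.map_one]
    have hδ_comm : ∀ z ∈ commutator ↥K, δ z = 1 := by
      have hTsub : ∀ (a : ↥K), δ a = 1 → δ a⁻¹ = 1 := by
        intro a ha
        have h1 : δ a * δ a⁻¹ = 1 := by rw [← hδ_mul, mul_inv_cancel, hδ_one]
        rwa [ha, one_mul] at h1
      intro z hz
      let T : Subgroup ↥K :=
        { carrier := {z : ↥K | δ z = 1}
          one_mem' := hδ_one
          mul_mem' := fun {a b} ha hb => by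
            show δ (a * b) = 1
            rw [hδ_mul, ha.out, hb.out, one_mul]
          inv_mem' := fun {a} ha => hTsub a ha.out }
      have hle : commutator ↥K ≤ T := by
        rw [commutator]
        refine Subgroup.commutator_le.mpr fun p _ q _ => ?_
        show δ ⁅p, q⁆ = 1
        rw [commutatorElement_def, hδ_mul, hδ_mul, hδ_mul]
        have h1 : δ p * δ p⁻¹ = 1 := by rw [← hδ_mul, mul_inv_cancel, hδ_one]
        have h2 : δ q * δ q⁻¹ = 1 := by rw [← hδ_mul, mul_inv_cancel, hδ_one]
        calc δ p * δ q * δ p⁻¹ * δ q⁻¹ = (δ p * δ p⁻¹) * (δ q * δ q⁻¹) := by ring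
          _ = 1 := by rw [h1, h2, one_mul]
      exact hle hz
    set m := finrank ℂ ↥W with hmdef
    have hm : 0 < m := finrank_pos
    have hpow : ∀ h ∈ H, lam h ^ m = 1 := by
      intro h hh
      have hh' : h ∈ Subgroup.map K.subtype (commutator ↥K) := by
        rw [LK.map_subtype_commutator]; exact hh
      obtain ⟨z, hz, hzval⟩ := hh'
      have hz2 : z = (⟨h, hHK hh⟩ : ↥K) := Subtype.ext hzval
      have hσz : σ z = lam h • (1 : Module.End ℂ ↥W) := by
        apply LinearMap.ext
        intro w
        apply Subtype.ext
        rw [hσ_apply, hz2, hWfix0 h hh (w : (Fin n → ℂ) ⧸ U) w.2]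
        simp
      have hd := hδ_comm z hz
      rw [hδdef] at hd
      simp only at hd
      rw [hσz, LinearMap.det_smul, _root_.map_one, mul_one] at hd
      exact hd
    have hlamH : ∀ h ∈ H, lam h = 1 := by
      intro h hh
      have hroots : {z : ℂ | z ^ m = 1}.Finite := by
        have : {z : ℂ | z ^ m = 1} ⊆ ↑(Polynomial.nthRoots m (1:ℂ)).toFinset := by
          intro z hz; simp [Polynomial.mem_nthRoots hm, hz.out]
        exact Set.Finite.subset (Set.finite_mem_finset _) this
      have := LK.eqOn_of_preconnected_of_finite hHconn.isPreconnected hlam_cont hroots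
        (fun x hx => hpow x hx) hh H.one_mem
      rw [this, hlam_one]
    have hWfix1 : ∀ (h) (hh : h ∈ H), ∀ w ∈ W, ρ ⟨h, hHK hh⟩ w = w := by
      intro h hh w hw
      rw [hWfix0 h hh w hw, hlamH h hh, one_smul]
    -- commuting family
    have hσcomm : ∀ x y : ↥K, Commute (σ x) (σ y) := by
      intro x y
      have hc : ((⁅x, y⁆ : ↥K) : GL (Fin n) ℂ) ∈ H := by
        have : (K.subtype ⁅x, y⁆ : GL (Fin n) ℂ) = ⁅K.subtype x, K.subtype y⁆ :=
          map_commutatorElement _ _ _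
        rw [show ((⁅x, y⁆ : ↥K) : GL (Fin n) ℂ) = K.subtype ⁅x, y⁆ from rfl, this]
        exact Subgroup.commutator_mem_commutator x.2 y.2
      have hσc : σ ⁅x, y⁆ = 1 := by
        apply LinearMap.ext
        intro w
        apply Subtype.ext
        rw [hσ_apply]
        have he : (⁅x, y⁆ : ↥K) = (⟨((⁅x, y⁆ : ↥K) : GL (Fin n) ℂ), hHK hc⟩ : ↥K) :=
          Subtype.ext rfl
        rw [he, hWfix1 _ hc (w : (Fin n → ℂ) ⧸ U) w.2]
        rfl
      have hxy : (x * y : ↥K) = ⁅x, y⁆ * (y * x) := by group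
      calc σ x * σ y = σ (x * y) := (hσ_mul x y).symm
        _ = σ ⁅x, y⁆ * (σ y * σ x) := by rw [hxy, hσ_mul, hσ_mul]
        _ = σ y * σ x := by rw [hσc, one_mul]
    obtain ⟨w, hw0, hwe⟩ :=
      LK.commute_exists_common_eigenvector m ↥W rfl hWnt ↥K σ hσcomm
    obtain ⟨v', hv'⟩ := U.mkQ_surjective (w : (Fin n → ℂ) ⧸ U)
    refine ⟨v', fun hmem => hw0 ?_, fun g hg => ?_⟩
    · have h0 : (w : (Fin n → ℂ) ⧸ U) = 0 := by
        rw [← hv', Submodule.mkQ_apply]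
        exact (Submodule.Quotient.mk_eq_zero U).mpr hmem
      exact Subtype.ext h0
    · obtain ⟨c, hc⟩ := hwe ⟨g, hg⟩
      refine ⟨c, ?_⟩
      have hval := congrArg Subtype.val hc
      rw [hσ_apply] at hval
      rw [← hv', ← hπdef, hρ_apply] at hval
      have hsmul : (((c • w : ↥W)) : (Fin n → ℂ) ⧸ U) = c • (w : (Fin n → ℂ) ⧸ U) := rfl
      rw [hsmul, ← hv'] at hval
      rw [← Submodule.Quotient.mk_eq_zero U]
      have : π ((g : Matrix (Fin n) (Fin n) ℂ).mulVec v' - c • v') = 0 := by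
        rw [hπdef, map_sub, _root_.map_smul, ← hπdef]
        rw [hval]
        rw [hπdef, Submodule.mkQ_apply]
        simp
      rw [hπdef, Submodule.mkQ_apply] at this
      exact this

-- extension step
lemma LK.step (n : ℕ) (G : Subgroup (GL (Fin n) ℂ))
    (hconn : IsConnected (G : Set (GL (Fin n) ℂ))) (hsolv : IsSolvable ↥G)
    (N : Submodule ℂ (Fin n → ℂ)) (hrank : finrank ℂ N < n)
    (hinv : ∀ g ∈ G, ∀ u ∈ N, (g : Matrix (Fin n) (Fin n) ℂ).mulVec u ∈ N) :
    ∃ W : Submodule ℂ (Fin n → ℂ), N ≤ W ∧ finrank ℂ W = finrank ℂ N + 1 ∧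
      ∀ g ∈ G, ∀ w ∈ W, (g : Matrix (Fin n) (Fin n) ℂ).mulVec w ∈ W := by
  obtain ⟨d, hd⟩ := hsolv.solvable
  have hcd : LK.cser G d = ⊥ := by rw [← LK.map_derivedSeries, hd, Subgroup.map_bot]
  have hNtop : N ≠ ⊤ := by
    intro h
    rw [h, finrank_top] at hrank
    simp [Module.finrank_pi] at hrank
  obtain ⟨v, hvN, hv⟩ := LK.main n d G hconn hcd N hNtop hinv
  have hv0 : v ≠ 0 := fun h => hvN (h ▸ N.zero_mem)
  refine ⟨N ⊔ Submodule.span ℂ {v}, le_sup_left, ?_, ?_⟩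
  · have h1 : N ⊓ Submodule.span ℂ {v} = ⊥ := by
      rw [eq_bot_iff]; rintro x ⟨hxU, hxs⟩
      obtain ⟨a, rfl⟩ := Submodule.mem_span_singleton.mp hxs
      rcases eq_or_ne a 0 with rfl | ha
      · simp
      · exact absurd ((N.smul_mem_iff ha).mp hxU) hvN
    have := Submodule.finrank_sup_add_finrank_inf_eq N (Submodule.span ℂ {v})
    rw [h1, finrank_bot, finrank_span_singleton hv0] at this
    omega
  · intro g hg w hw
    obtain ⟨x, hx, y, hy, rfl⟩ := Submodule.mem_sup.mp hw
    obtain ⟨a, rfl⟩ := Submodule.mem_span_singleton.mp hy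
    obtain ⟨c, hc⟩ := hv g hg
    have e : (g : Matrix (Fin n) (Fin n) ℂ).mulVec (x + a • v) =
        ((g : Matrix (Fin n) (Fin n) ℂ).mulVec x +
          a • ((g : Matrix (Fin n) (Fin n) ℂ).mulVec v - c • v)) + (a * c) • v := by
      rw [mulVec_add, mulVec_smul]
      module
    rw [e]
    exact Submodule.add_mem_sup
      (N.add_mem (hinv g hg x hx) (N.smul_mem a hc))
      (Submodule.smul_mem _ _ (Submodule.mem_span_singleton_self v))

theorem flag_exists (n : ℕ) (G : Subgroup (GL (Fin n) ℂ))
    (hconn : IsConnected (G : Set (GL (Fin n) ℂ))) (hsolv : IsSolvable G) :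
    ∃ V : Fin (n + 1) → Submodule ℂ (Fin n → ℂ),
        Monotone V ∧ (∀ j, Module.finrank ℂ (V j) = (j : ℕ)) ∧
        (∀ g ∈ G, ∀ j, ∀ v ∈ V j, (g : Matrix (Fin n) (Fin n) ℂ).mulVec v ∈ V j) := by
  classical
  let P : Submodule ℂ (Fin n → ℂ) → Prop := fun N =>
    ∃ W : Submodule ℂ (Fin n → ℂ), N ≤ W ∧ finrank ℂ W = finrank ℂ N + 1 ∧
      ∀ g ∈ G, ∀ w ∈ W, (g : Matrix (Fin n) (Fin n) ℂ).mulVec w ∈ W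
  have hext : ∀ N : Submodule ℂ (Fin n → ℂ), ∃ W : Submodule ℂ (Fin n → ℂ),
      N ≤ W ∧ (P N → finrank ℂ ↥W = finrank ℂ ↥N + 1 ∧
        ∀ g ∈ G, ∀ w ∈ W, (g : Matrix (Fin n) (Fin n) ℂ).mulVec w ∈ W) := by
    intro N
    by_cases h : P N
    · exact ⟨h.choose, h.choose_spec.1, fun _ => h.choose_spec.2⟩
    · exact ⟨N, le_refl N, fun hP => absurd hP h⟩
  obtain ⟨f, hf⟩ := Classical.axiomOfChoice hext
  obtain ⟨F, hF0, hFsucc⟩ : ∃ F : ℕ → Submodule ℂ (Fin n → ℂ),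
      F 0 = ⊥ ∧ ∀ k, F (k + 1) = f (F k) :=
    ⟨fun k => Nat.rec ⊥ (fun _ N => f N) k, rfl, fun _ => rfl⟩
  have hmono : ∀ k, F k ≤ F (k + 1) := fun k => (hFsucc k) ▸ (hf (F k)).1
  have hgood : ∀ k, k ≤ n → finrank ℂ ↥(F k) = k ∧
      (∀ g ∈ G, ∀ v ∈ F k, (g : Matrix (Fin n) (Fin n) ℂ).mulVec v ∈ F k) := by
    intro k
    induction k with
    | zero => intro _; refine ⟨by simp [hF0], by simp [hF0]⟩
    | succ k ihk =>
      intro hk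
      obtain ⟨hr, hi⟩ := ihk (by omega)
      have hP : P (F k) := LK.step n G hconn hsolv (F k) (by omega) hi
      obtain ⟨hr', hi'⟩ := (hf (F k)).2 hP
      rw [hFsucc]
      exact ⟨by rw [hr', hr], hi'⟩
  refine ⟨fun j => F j, ?_, ?_, ?_⟩
  · intro i j hij
    have : (i : ℕ) ≤ (j : ℕ) := hij
    exact monotone_nat_of_le_succ hmono this
  · intro j
    exact (hgood j j.is_le).1
  · intro g hg j v hv
    exact (hgood j j.is_le).2 g hg v hv

theorem part2 (n : ℕ) (G : Subgroup (GL (Fin n) ℂ))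
    (V : Fin (n + 1) → Submodule ℂ (Fin n → ℂ))
    (hmono : Monotone V) (hrank : ∀ j, Module.finrank ℂ (V j) = (j : ℕ))
    (hinv : ∀ g ∈ G, ∀ j, ∀ v ∈ V j, (g : Matrix (Fin n) (Fin n) ℂ).mulVec v ∈ V j) :
    ∀ g ∈ commutator G, ∀ j : Fin n, ∀ v ∈ V j.succ,
      ((g : GL (Fin n) ℂ) : Matrix (Fin n) (Fin n) ℂ).mulVec v - v ∈ V j.castSucc := by
  intro g hg j
  set A := V j.castSucc with hA
  set B := V j.succ with hB
  have hAB : A ≤ B := hmono j.castSucc_le_succ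
  have hrA : finrank ℂ A = (j : ℕ) := by rw [hA, hrank]; simp
  have hrB : finrank ℂ B = (j : ℕ) + 1 := by rw [hB, hrank]; simp
  have hAinv : ∀ x ∈ G, ∀ v ∈ A, (x : Matrix (Fin n) (Fin n) ℂ).mulVec v ∈ A :=
    fun x hx => hinv x hx j.castSucc
  have hBinv : ∀ x ∈ G, ∀ v ∈ B, (x : Matrix (Fin n) (Fin n) ℂ).mulVec v ∈ B :=
    fun x hx => hinv x hx j.succ
  -- pick v₀
  obtain ⟨v₀, hv₀B, hv₀A⟩ : ∃ v₀ ∈ B, v₀ ∉ A := by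
    have : A < B := lt_of_le_of_ne hAB (fun h => by rw [h, hrB] at hrA; omega)
    obtain ⟨x, hxB, hxA⟩ := SetLike.exists_of_lt this
    exact ⟨x, hxB, hxA⟩
  have hv₀0 : v₀ ≠ 0 := fun h => hv₀A (h ▸ A.zero_mem)
  have hBsup : A ⊔ Submodule.span ℂ {v₀} = B := by
    apply Submodule.eq_of_le_of_finrank_le
    · exact sup_le hAB ((Submodule.span_singleton_le_iff_mem v₀ B).mpr hv₀B)
    · have h1 : A ⊓ Submodule.span ℂ {v₀} = ⊥ := by
        rw [eq_bot_iff]; rintro x ⟨hxU, hxs⟩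
        obtain ⟨a, rfl⟩ := Submodule.mem_span_singleton.mp hxs
        rcases eq_or_ne a 0 with rfl | ha
        · simp
        · exact absurd ((A.smul_mem_iff ha).mp hxU) hv₀A
      have := Submodule.finrank_sup_add_finrank_inf_eq A (Submodule.span ℂ {v₀})
      rw [h1, finrank_bot, finrank_span_singleton hv₀0] at this
      omega
  -- scalar action
  have hscal : ∀ x ∈ G, ∃ c : ℂ, c ≠ 0 ∧
      (x : Matrix (Fin n) (Fin n) ℂ).mulVec v₀ - c • v₀ ∈ A := by
    intro x hx
    have : (x : Matrix (Fin n) (Fin n) ℂ).mulVec v₀ ∈ B := hBinv x hx v₀ hv₀B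
    rw [← hBsup] at this
    obtain ⟨a, ha, y, hy, hxy⟩ := Submodule.mem_sup.mp this
    obtain ⟨c, rfl⟩ := Submodule.mem_span_singleton.mp hy
    refine ⟨c, ?_, by rw [← hxy]; simpa using ha⟩
    rintro rfl
    rw [zero_smul, add_zero] at hxy
    apply hv₀A
    have hmem : (x : Matrix (Fin n) (Fin n) ℂ).mulVec v₀ ∈ A := hxy ▸ ha
    have := hAinv x⁻¹ (G.inv_mem hx) _ hmem
    rwa [mulVec_mulVec, ← Units.val_mul, inv_mul_cancel, Units.val_one, one_mulVec] at this
  -- helper lemmas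
  have hchain : ∀ x ∈ G, ∀ c : ℂ, (x : Matrix (Fin n) (Fin n) ℂ).mulVec v₀ - c • v₀ ∈ A →
      ∀ (u : Fin n → ℂ) (t : ℂ), u - t • v₀ ∈ A →
        (x : Matrix (Fin n) (Fin n) ℂ).mulVec u - (c * t) • v₀ ∈ A := by
    intro x hx c hc u t hu
    have e : (x : Matrix (Fin n) (Fin n) ℂ).mulVec u - (c * t) • v₀ =
        (x : Matrix (Fin n) (Fin n) ℂ).mulVec (u - t • v₀) +
          t • ((x : Matrix (Fin n) (Fin n) ℂ).mulVec v₀ - c • v₀) := by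
      rw [mulVec_sub, mulVec_smul]
      module
    rw [e]
    exact A.add_mem (hAinv x hx _ hu) (A.smul_mem t hc)
  have hinvscal : ∀ x ∈ G, ∀ c : ℂ, c ≠ 0 →
      (x : Matrix (Fin n) (Fin n) ℂ).mulVec v₀ - c • v₀ ∈ A →
      ((x⁻¹ : GL (Fin n) ℂ) : Matrix (Fin n) (Fin n) ℂ).mulVec v₀ - c⁻¹ • v₀ ∈ A := by
    intro x hx c hc0 hc
    have h1 := hAinv x⁻¹ (G.inv_mem hx) _ hc
    rw [mulVec_sub, mulVec_smul, mulVec_mulVec, ← Units.val_mul, inv_mul_cancel,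
      Units.val_one, one_mulVec] at h1
    have e : ((x⁻¹ : GL (Fin n) ℂ) : Matrix (Fin n) (Fin n) ℂ).mulVec v₀ - c⁻¹ • v₀ =
        (-c⁻¹) • (v₀ - c • ((x⁻¹ : GL (Fin n) ℂ) : Matrix (Fin n) (Fin n) ℂ).mulVec v₀) := by
      rw [smul_sub, smul_smul]
      field_simp
      module
    rw [e]
    exact A.smul_mem _ h1
  -- the subgroup S
  let S : Subgroup (GL (Fin n) ℂ) :=
    { carrier := {x : GL (Fin n) ℂ |
        (∀ a ∈ A, (x : Matrix (Fin n) (Fin n) ℂ).mulVec a ∈ A) ∧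
        (∀ b ∈ B, (x : Matrix (Fin n) (Fin n) ℂ).mulVec b ∈ B) ∧
        (∀ b ∈ B, (x : Matrix (Fin n) (Fin n) ℂ).mulVec b - b ∈ A)}
      one_mem' :=
        ⟨fun a ha => by simpa [Units.val_one, one_mulVec] using ha,
         fun b hb => by simpa [Units.val_one, one_mulVec] using hb,
         fun b _ => by simp [Units.val_one, one_mulVec]⟩
      mul_mem' := by
        rintro x y ⟨hx1, hx2, hx3⟩ ⟨hy1, hy2, hy3⟩
        refine ⟨fun a ha => ?_, fun b hb => ?_, fun b hb => ?_⟩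
        · rw [Units.val_mul, ← mulVec_mulVec]; exact hx1 _ (hy1 a ha)
        · rw [Units.val_mul, ← mulVec_mulVec]; exact hx2 _ (hy2 b hb)
        · have e : ((x * y : GL (Fin n) ℂ) : Matrix (Fin n) (Fin n) ℂ).mulVec b - b =
              (x : Matrix (Fin n) (Fin n) ℂ).mulVec
                ((y : Matrix (Fin n) (Fin n) ℂ).mulVec b - b) +
              ((x : Matrix (Fin n) (Fin n) ℂ).mulVec b - b) := by
            rw [Units.val_mul, ← mulVec_mulVec, mulVec_sub]
            abel
          rw [e]
          exact A.add_mem (hx1 _ (hy3 b hb)) (hx3 b hb)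
      inv_mem' := by
        rintro x ⟨hx1, hx2, hx3⟩
        have hsur : ∀ (W : Submodule ℂ (Fin n → ℂ)),
            (∀ w ∈ W, (x : Matrix (Fin n) (Fin n) ℂ).mulVec w ∈ W) →
            ∀ w ∈ W, ((x⁻¹ : GL (Fin n) ℂ) : Matrix (Fin n) (Fin n) ℂ).mulVec w ∈ W := by
          intro W hW w hw
          set e := (Matrix.GeneralLinearGroup.toLin x).toLinearEquiv with hedef
          have hmaple : W.map (e : (Fin n → ℂ) →ₗ[ℂ] (Fin n → ℂ)) ≤ W := by
            rintro y ⟨z, hz, rfl⟩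
            have : (e : (Fin n → ℂ) →ₗ[ℂ] (Fin n → ℂ)) z =
                (x : Matrix (Fin n) (Fin n) ℂ).mulVec z := by
              rw [hedef]
              show (Matrix.GeneralLinearGroup.toLin x).toLinearEquiv z = _
              rfl
            rw [this]
            exact hW z hz
          have hmapeq : W.map (e : (Fin n → ℂ) →ₗ[ℂ] (Fin n → ℂ)) = W :=
            Submodule.eq_of_le_of_finrank_le hmaple (by rw [LinearEquiv.finrank_map_eq])
          rw [← hmapeq] at hw
          obtain ⟨z, hz, hze⟩ := hw
          have : ((x⁻¹ : GL (Fin n) ℂ) : Matrix (Fin n) (Fin n) ℂ).mulVec w = z := by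
            have hze' : (x : Matrix (Fin n) (Fin n) ℂ).mulVec z = w := by
              rw [← hze, hedef]
              show _ = (Matrix.GeneralLinearGroup.toLin x).toLinearEquiv z
              rfl
            rw [← hze', mulVec_mulVec, ← Units.val_mul, inv_mul_cancel, Units.val_one,
              one_mulVec]
          rw [this]
          exact hz
        refine ⟨hsur A hx1, hsur B hx2, fun b hb => ?_⟩
        have hbinv : ((x⁻¹ : GL (Fin n) ℂ) : Matrix (Fin n) (Fin n) ℂ).mulVec b ∈ B :=
          hsur B hx2 b hb
        have h3 := hx3 _ hbinv
        rw [mulVec_mulVec, ← Units.val_mul, mul_inv_cancel, Units.val_one, one_mulVec] at h3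
        have := A.neg_mem h3
        rwa [neg_sub] at this
    }
  have hcomm_le : (⁅G, G⁆ : Subgroup (GL (Fin n) ℂ)) ≤ S := by
    refine Subgroup.commutator_le.mpr fun p hp q hq => ?_
    have hmemG : ∀ z ∈ G, (∀ a ∈ A, (z : Matrix (Fin n) (Fin n) ℂ).mulVec a ∈ A) ∧
        (∀ b ∈ B, (z : Matrix (Fin n) (Fin n) ℂ).mulVec b ∈ B) :=
      fun z hz => ⟨fun a ha => hAinv z hz a ha, fun b hb => hBinv z hz b hb⟩
    refine ⟨?_, ?_, ?_⟩
    · intro a ha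
      rw [commutatorElement_def, Units.val_mul, Units.val_mul, Units.val_mul,
        ← mulVec_mulVec, ← mulVec_mulVec, ← mulVec_mulVec]
      exact (hmemG p hp).1 _ ((hmemG q hq).1 _
        ((hmemG p⁻¹ (G.inv_mem hp)).1 _ ((hmemG q⁻¹ (G.inv_mem hq)).1 a ha)))
    · intro b hb
      rw [commutatorElement_def, Units.val_mul, Units.val_mul, Units.val_mul,
        ← mulVec_mulVec, ← mulVec_mulVec, ← mulVec_mulVec]
      exact (hmemG p hp).2 _ ((hmemG q hq).2 _
        ((hmemG p⁻¹ (G.inv_mem hp)).2 _ ((hmemG q⁻¹ (G.inv_mem hq)).2 b hb)))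
    · -- the key computation at v₀ and then linearity
      obtain ⟨cp, hcp0, hcp⟩ := hscal p hp
      obtain ⟨cq, hcq0, hcq⟩ := hscal q hq
      have h0 : v₀ - (1:ℂ) • v₀ ∈ A := by rw [one_smul, sub_self]; exact A.zero_mem
      have h1 := hchain _ (G.inv_mem hq) _ (hinvscal q hq cq hcq0 hcq) _ _ h0
      have h2 := hchain _ (G.inv_mem hp) _ (hinvscal p hp cp hcp0 hcp) _ _ h1
      have h3 := hchain _ hq _ hcq _ _ h2
      have h4 := hchain _ hp _ hcp _ _ h3
      have hv₀case : ((⁅p, q⁆ : GL (Fin n) ℂ) : Matrix (Fin n) (Fin n) ℂ).mulVec v₀ - v₀ ∈ A := by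
        have e : ((⁅p, q⁆ : GL (Fin n) ℂ) : Matrix (Fin n) (Fin n) ℂ).mulVec v₀ =
            (p : Matrix (Fin n) (Fin n) ℂ).mulVec
              ((q : Matrix (Fin n) (Fin n) ℂ).mulVec
                (((p⁻¹ : GL (Fin n) ℂ) : Matrix (Fin n) (Fin n) ℂ).mulVec
                  (((q⁻¹ : GL (Fin n) ℂ) : Matrix (Fin n) (Fin n) ℂ).mulVec v₀))) := by
          rw [commutatorElement_def, Units.val_mul, Units.val_mul, Units.val_mul,
            ← mulVec_mulVec, ← mulVec_mulVec, ← mulVec_mulVec]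
        rw [e]
        have hone : cp * (cq * (cp⁻¹ * (cq⁻¹ * 1))) = 1 := by field_simp
        have := h4
        rw [hone, one_smul] at this
        exact this
      intro b hb
      rw [← hBsup] at hb
      obtain ⟨a, ha, y, hy, rfl⟩ := Submodule.mem_sup.mp hb
      obtain ⟨t, rfl⟩ := Submodule.mem_span_singleton.mp hy
      have e : ((⁅p, q⁆ : GL (Fin n) ℂ) : Matrix (Fin n) (Fin n) ℂ).mulVec (a + t • v₀) -
          (a + t • v₀) =
          (((⁅p, q⁆ : GL (Fin n) ℂ) : Matrix (Fin n) (Fin n) ℂ).mulVec a - a) +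
            t • (((⁅p, q⁆ : GL (Fin n) ℂ) : Matrix (Fin n) (Fin n) ℂ).mulVec v₀ - v₀) := by
        rw [mulVec_add, mulVec_smul]
        module
      rw [e]
      have hAcomm : ∀ a' ∈ A, ((⁅p, q⁆ : GL (Fin n) ℂ) : Matrix (Fin n) (Fin n) ℂ).mulVec a' ∈ A := by
        intro a' ha'
        rw [commutatorElement_def, Units.val_mul, Units.val_mul, Units.val_mul,
          ← mulVec_mulVec, ← mulVec_mulVec, ← mulVec_mulVec]
        exact (hmemG p hp).1 _ ((hmemG q hq).1 _
          ((hmemG p⁻¹ (G.inv_mem hp)).1 _ ((hmemG q⁻¹ (G.inv_mem hq)).1 a' ha')))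
      exact A.add_mem (A.sub_mem (hAcomm a ha) ha) (A.smul_mem t hv₀case)
  have hgmem : ((g : GL (Fin n) ℂ)) ∈ S := by
    apply hcomm_le
    rw [← LK.map_subtype_commutator G]
    exact ⟨g, hg, rfl⟩
  intro v hv
  exact hgmem.2.2 v hv

theorem lie_flag_for_connected_solvable (n : ℕ) (G : Subgroup (GL (Fin n) ℂ))
    (hconn : IsConnected (G : Set (GL (Fin n) ℂ))) (hsolv : IsSolvable G) :
    (∃ V : Fin (n + 1) → Submodule ℂ (Fin n → ℂ),
        Monotone V ∧ (∀ j, Module.finrank ℂ (V j) = (j : ℕ)) ∧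
        (∀ g ∈ G, ∀ j, ∀ v ∈ V j, (g : Matrix (Fin n) (Fin n) ℂ).mulVec v ∈ V j)) ∧
    (∀ V : Fin (n + 1) → Submodule ℂ (Fin n → ℂ),
        Monotone V → (∀ j, Module.finrank ℂ (V j) = (j : ℕ)) →
        (∀ g ∈ G, ∀ j, ∀ v ∈ V j, (g : Matrix (Fin n) (Fin n) ℂ).mulVec v ∈ V j) →
        ∀ g ∈ commutator G, ∀ j : Fin n, ∀ v ∈ V j.succ,
          ((g : GL (Fin n) ℂ) : Matrix (Fin n) (Fin n) ℂ).mulVec v - v ∈ V j.castSucc) := by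
  exact ⟨flag_exists n G hconn hsolv, fun V hm hr hi => part2 n G V hm hr hi⟩
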